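/- Let G be a semi-Markovian causal graph with observed variables V, let 𝔸 be a finite collection of subsets of V, let S ⊆ V, and let S₁, …, S_l be the c-components of S. Then Q[S] is g-identifiable from (𝔸, G) if and only if Q[S_i] is g-identifiable from (𝔸, G) for every i ∈ [1:l]. -/

import Mathlib

open scoped Classical

/-- A semi-Markovian causal graph: a DAG over a finite vertex set partitioned into
observed (`obs`) and unobserved (`unobs`) variables, where every unobserved variable
has no parents and exactly two (distinct, observed) children. -/
structure CausalGraph (ν : Type) [Fintype ν] [DecidableEq ν] where
  obs : Finset ν
  unobs : Finset ν
  disj : Disjoint obs unobs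
  E : ν → ν → Prop
  edge_mem : ∀ x y, E x y → x ∈ obs ∪ unobs ∧ y ∈ obs ∪ unobs
  acyclic : ∀ x, ¬ Relation.TransGen E x x
  unobs_no_parent : ∀ u ∈ unobs, ∀ w, ¬ E w u
  unobs_two_children : ∀ u ∈ unobs,
    ∃ a b, a ≠ b ∧ a ∈ obs ∧ b ∈ obs ∧ (∀ w, E u w ↔ w = a ∨ w = b)

namespace CausalGraph

variable {ν : Type} [Fintype ν] [DecidableEq ν]

def verts (G : CausalGraph ν) : Finset ν := G.obs ∪ G.unobs

/-- A structural equation model over the causal graph `G`: finite nonempty domains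
(encoded as finite sets of naturals), a pmf for each unobserved variable, and a
conditional pmf (given an assignment to the parents) for each observed variable. -/
structure SEM (G : CausalGraph ν) where
  dom : ν → Finset ℕ
  dom_ne : ∀ x, (dom x).Nonempty
  pU : ν → ℕ → ℝ
  pU_nonneg : ∀ u n, 0 ≤ pU u n
  pU_sum : ∀ u ∈ G.unobs, ∑ n ∈ dom u, pU u n = 1
  pO : ν → ℕ → (ν → ℕ) → ℝ
  pO_nonneg : ∀ x n pa, 0 ≤ pO x n pa
  pO_sum : ∀ x ∈ G.obs, ∀ pa : ν → ℕ, ∑ n ∈ dom x, pO x n pa = 1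
  pO_par : ∀ x n (pa pa' : ν → ℕ), (∀ p, G.E p x → pa p = pa' p) → pO x n pa = pO x n pa'

namespace SEM

variable {G : CausalGraph ν}

/-- Full assignments: all variables of `G` get values in their domains
(non-vertices are pinned to `0`). -/
noncomputable def fullAssign (M : SEM G) : Finset (ν → ℕ) :=
  Fintype.piFinset (fun x => if x ∈ G.verts then M.dom x else {0})

/-- Observed assignments `dom(V)`: observed variables get values in their domains
(all other coordinates are pinned to `0`). -/
noncomputable def obsAssign (M : SEM G) : Finset (ν → ℕ) :=
  Fintype.piFinset (fun x => if x ∈ G.obs then M.dom x else {0})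

/-- `Q^M[S](v) = Σ_u Π_{X ∈ S} P(x | pa_G(X)) Π_{U} P(u)`. -/
noncomputable def Q (M : SEM G) (S : Finset ν) (v : ν → ℕ) : ℝ :=
  ∑ w ∈ M.fullAssign.filter (fun w => ∀ x ∈ G.obs, w x = v x),
    (∏ x ∈ S, M.pO x (w x) w) * ∏ u ∈ G.unobs, M.pU u (w u)

/-- The observational distribution `P^M(v) = Q^M[V](v)`. -/
noncomputable def P (M : SEM G) (v : ν → ℕ) : ℝ := M.Q G.obs v

/-- Post-interventional probability `P^M_x(y)`: sum of `Q^M[V∖X]` over all observed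
realizations consistent with `x` on `X` and `y` on `Y`. -/
noncomputable def Px (M : SEM G) (X : Finset ν) (x : ν → ℕ) (Y : Finset ν) (y : ν → ℕ) : ℝ :=
  ∑ v ∈ M.obsAssign.filter (fun v => (∀ i ∈ X, v i = x i) ∧ (∀ i ∈ Y, v i = y i)),
    M.Q (G.obs \ X) v

/-- `M ∈ 𝕄⁺(G)`: strictly positive observational distribution. -/
def positive (M : SEM G) : Prop := ∀ v ∈ M.obsAssign, 0 < M.P v

end SEM

/-- The causal effect of `X` on `Y` is identifiable from `G`. -/
def Identifiable (G : CausalGraph ν) (X Y : Finset ν) : Prop :=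
  ∀ M₁ M₂ : SEM G, M₁.positive → M₂.positive →
    (∀ i ∈ G.obs, M₁.dom i = M₂.dom i) →
    (∀ v ∈ M₁.obsAssign, M₁.P v = M₂.P v) →
    ∀ x y : ν → ℕ, (∀ i ∈ X, x i ∈ M₁.dom i) → (∀ i ∈ Y, y i ∈ M₁.dom i) →
      M₁.Px X x Y y = M₂.Px X x Y y

/-- `Q[S]` is identifiable from `G`. -/
def QIdentifiable (G : CausalGraph ν) (S : Finset ν) : Prop :=
  Identifiable G (G.obs \ S) S

/-- The causal effect of `X` on `Y` is g-identifiable from `(𝔸, G)`. -/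
def GIdentifiable (G : CausalGraph ν) (𝔸 : Finset (Finset ν)) (X Y : Finset ν) : Prop :=
  ∀ M₁ M₂ : SEM G, M₁.positive → M₂.positive →
    (∀ i ∈ G.obs, M₁.dom i = M₂.dom i) →
    (∀ A ∈ 𝔸, ∀ v ∈ M₁.obsAssign, M₁.Q A v = M₂.Q A v) →
    ∀ x y : ν → ℕ, (∀ i ∈ X, x i ∈ M₁.dom i) → (∀ i ∈ Y, y i ∈ M₁.dom i) →
      M₁.Px X x Y y = M₂.Px X x Y y

/-- `Q[S]` is g-identifiable from `(𝔸, G)`. -/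
def QGIdentifiable (G : CausalGraph ν) (𝔸 : Finset (Finset ν)) (S : Finset ν) : Prop :=
  GIdentifiable G 𝔸 (G.obs \ S) S

/-- Bidirected edge of `G_X` between `a` and `b`: distinct members of `X` sharing an
unobserved parent (whose two children then necessarily both lie in `X`). -/
def biEdge (G : CausalGraph ν) (X : Finset ν) (a b : ν) : Prop :=
  a ≠ b ∧ a ∈ X ∧ b ∈ X ∧ ∃ u ∈ G.unobs, G.E u a ∧ G.E u b

/-- `X` is a single c-component of `G`. -/
def SingleC (G : CausalGraph ν) (X : Finset ν) : Prop :=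
  X.Nonempty ∧ ∀ a ∈ X, ∀ b ∈ X, Relation.ReflTransGen (G.biEdge X) a b

/-- The c-components of `S`: connected components of the bidirected part of `G_S`. -/
noncomputable def cComponents (G : CausalGraph ν) (S : Finset ν) : Finset (Finset ν) :=
  S.image (fun a => S.filter (fun b => Relation.ReflTransGen (G.biEdge S) a b))

/-- Directed edge of `G_X` (both endpoints in `X`). -/
def dirEdgeIn (G : CausalGraph ν) (X : Finset ν) (a b : ν) : Prop :=
  a ∈ X ∧ b ∈ X ∧ G.E a b

/-- `Anc_Y(G_X)`: members of `X` having a directed path in `G_X` to some member of `Y`. -/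
noncomputable def ancIn (G : CausalGraph ν) (X Y : Finset ν) : Finset ν :=
  X.filter (fun a => ∃ y ∈ Y, Relation.ReflTransGen (G.dirEdgeIn X) a y)

/-- Unobserved vertices of the induced subgraph `G[A]`: unobserved vertices of `G`
both of whose children lie in `A`. -/
noncomputable def inducedUnobs (G : CausalGraph ν) (A : Finset ν) : Finset ν :=
  G.unobs.filter (fun u => ∀ w, G.E u w → w ∈ A)

/-- The induced subgraph `G[A]`. -/
noncomputable def induced (G : CausalGraph ν) (A : Finset ν) : CausalGraph ν where
  obs := A ∩ G.obs
  unobs := G.inducedUnobs A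
  disj := G.disj.mono Finset.inter_subset_right (Finset.filter_subset _ _)
  E x y := G.E x y ∧ x ∈ (A ∩ G.obs) ∪ G.inducedUnobs A ∧ y ∈ (A ∩ G.obs) ∪ G.inducedUnobs A
  edge_mem := fun x y h => ⟨h.2.1, h.2.2⟩
  acyclic := fun x h => G.acyclic x (h.lift id (fun a b (hab : G.E a b ∧ _) => hab.1))
  unobs_no_parent := fun u hu w hw =>
    G.unobs_no_parent u (Finset.mem_filter.mp hu).1 w hw.1
  unobs_two_children := by
    intro u hu
    have hu' := Finset.mem_filter.mp hu
    obtain ⟨a, b, hab, ha, hb, hiff⟩ := G.unobs_two_children u hu'.1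
    have hEa : G.E u a := (hiff a).mpr (Or.inl rfl)
    have hEb : G.E u b := (hiff b).mpr (Or.inr rfl)
    have haA : a ∈ A := hu'.2 a hEa
    have hbA : b ∈ A := hu'.2 b hEb
    refine ⟨a, b, hab, Finset.mem_inter.mpr ⟨haA, ha⟩, Finset.mem_inter.mpr ⟨hbA, hb⟩, ?_⟩
    intro w
    constructor
    · intro hw; exact (hiff w).mp hw.1
    · rintro (rfl | rfl)
      · exact ⟨hEa, Finset.mem_union.mpr (Or.inr hu),
          Finset.mem_union.mpr (Or.inl (Finset.mem_inter.mpr ⟨haA, ha⟩))⟩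
      · exact ⟨hEb, Finset.mem_union.mpr (Or.inr hu),
          Finset.mem_union.mpr (Or.inl (Finset.mem_inter.mpr ⟨hbA, hb⟩))⟩

/-- `H` is a subgraph of `G`. -/
def IsSubgraph (H G : CausalGraph ν) : Prop :=
  H.obs ⊆ G.obs ∧ H.unobs ⊆ G.unobs ∧ ∀ a b, H.E a b → G.E a b

/-- `H` is an `R`-rooted c-forest: `R` is the root set of `H`, the observed vertex set of
`H` is a single c-component, and every observed vertex has at most one child in `H`. -/
def IsCForest (H : CausalGraph ν) (R : Finset ν) : Prop :=
  H.obs.filter (fun x => ∀ w, ¬ H.E x w) = R ∧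
  H.SingleC H.obs ∧
  ∀ x ∈ H.obs, ∀ w w', H.E x w → H.E x w' → w = w'

end CausalGraph
namespace CausalGraph

variable {ν : Type} [Fintype ν] [DecidableEq ν] {G : CausalGraph ν}

namespace SEM

variable (M : SEM G)

/-- Coordinate domains with observed coordinates pinned to `v`. -/
noncomputable def Dfix (v : ν → ℕ) : ν → Finset ℕ :=
  fun x => if x ∈ G.unobs then M.dom x else {v x}

lemma Dfix_nonempty (v : ν → ℕ) (x : ν) : (M.Dfix v x).Nonempty := by
  unfold Dfix; split
  · exact M.dom_ne x
  · exact ⟨v x, Finset.mem_singleton_self _⟩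

lemma mem_obsAssign {v : ν → ℕ} (hv : v ∈ M.obsAssign) :
    ∀ x, v x ∈ (if x ∈ G.obs then M.dom x else ({0} : Finset ℕ)) :=
  (Fintype.mem_piFinset).mp hv

lemma obsAssign_dom {v : ν → ℕ} (hv : v ∈ M.obsAssign) {x : ν} (hx : x ∈ G.obs) :
    v x ∈ M.dom x := by
  have := M.mem_obsAssign hv x; rwa [if_pos hx] at this

lemma obsAssign_zero {v : ν → ℕ} (hv : v ∈ M.obsAssign) {x : ν} (hx : x ∉ G.obs) :
    v x = 0 := by
  have := M.mem_obsAssign hv x; rw [if_neg hx] at this; simpa using this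

lemma filter_fullAssign {v : ν → ℕ} (hv : v ∈ M.obsAssign) :
    M.fullAssign.filter (fun w => ∀ x ∈ G.obs, w x = v x)
      = Fintype.piFinset (M.Dfix v) := by
  ext w
  simp only [Finset.mem_filter, fullAssign, Fintype.mem_piFinset, Dfix]
  constructor
  · rintro ⟨hw, hag⟩ x
    by_cases hu : x ∈ G.unobs
    · rw [if_pos hu]
      have := hw x
      rw [if_pos (by simp [verts, hu])] at this
      exact this
    · rw [if_neg hu]
      by_cases ho : x ∈ G.obs
      · simp [hag x ho]
      · have := hw x
        rw [if_neg (by simp [verts, ho, hu])] at this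
        have h0 : w x = 0 := by simpa using this
        simp [h0, M.obsAssign_zero hv ho]
  · intro hw
    constructor
    · intro x
      by_cases hu : x ∈ G.unobs
      · have := hw x; rw [if_pos hu] at this
        rw [if_pos (by simp [verts, hu])]
        exact this
      · have := hw x; rw [if_neg hu] at this
        have hwx : w x = v x := by simpa using this
        by_cases ho : x ∈ G.obs
        · rw [if_pos (by simp [verts, ho])]
          rw [hwx]; exact M.obsAssign_dom hv ho
        · rw [if_neg (by simp [verts, ho, hu])]
          simp [hwx, M.obsAssign_zero hv ho]
    · intro x ho
      have := hw x
      have hu : x ∉ G.unobs := fun hu => (Finset.disjoint_left.mp G.disj ho) hu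
      rw [if_neg hu] at this
      simpa using this

lemma Q_eq_sum {v : ν → ℕ} (hv : v ∈ M.obsAssign) (T : Finset ν) :
    M.Q T v = ∑ w ∈ Fintype.piFinset (M.Dfix v),
      (∏ x ∈ T, M.pO x (w x) w) * ∏ u ∈ G.unobs, M.pU u (w u) := by
  rw [Q, M.filter_fullAssign hv]

end SEM

end CausalGraph
namespace CausalGraph

variable {ν : Type} [Fintype ν] [DecidableEq ν]

/-- Reindexing a sum over a pi-set when a pinned coordinate is repinned. -/
lemma sum_piFinset_update (D : ν → Finset ℕ) (s : ν) (c n : ℕ) (hD : D s = {c})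
    (H : (ν → ℕ) → ℝ) :
    ∑ w ∈ Fintype.piFinset (Function.update D s {n}), H w
      = ∑ w ∈ Fintype.piFinset D, H (Function.update w s n) := by
  refine Finset.sum_bij' (fun w _ => Function.update w s c)
    (fun w _ => Function.update w s n) ?_ ?_ ?_ ?_ ?_
  · intro w hw
    rw [Fintype.mem_piFinset] at hw ⊢
    intro x
    by_cases hx : x = s
    · subst hx; rw [Function.update_self, hD]; exact Finset.mem_singleton_self _
    · rw [Function.update_of_ne hx]
      have := hw x; rwa [Function.update_of_ne hx] at this
  · intro w hw
    rw [Fintype.mem_piFinset] at hw ⊢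
    intro x
    by_cases hx : x = s
    · subst hx; rw [Function.update_self, Function.update_self]
      exact Finset.mem_singleton_self _
    · rw [Function.update_of_ne hx, Function.update_of_ne hx]
      exact hw x
  · intro w hw
    rw [Fintype.mem_piFinset] at hw
    have hws : w s = n := by
      have := hw s; rw [Function.update_self] at this; simpa using this
    funext x
    by_cases hx : x = s
    · subst hx; simp [hws]
    · rw [Function.update_of_ne hx, Function.update_of_ne hx]
  · intro w hw
    rw [Fintype.mem_piFinset] at hw
    have hws : w s = c := by
      have := hw s; rw [hD] at this; simpa using this
    funext x
    by_cases hx : x = s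
    · subst hx; simp [hws]
    · rw [Function.update_of_ne hx, Function.update_of_ne hx]
  · intro w hw
    congr 1
    rw [Fintype.mem_piFinset] at hw
    have hws : w s = n := by
      have := hw s; rw [Function.update_self] at this; simpa using this
    funext x
    by_cases hx : x = s
    · subst hx; simp [hws]
    · rw [Function.update_of_ne hx, Function.update_of_ne hx]

/-- Normalization: summing a product of per-coordinate pmfs over a pi-set gives 1. -/
lemma sum_piFinset_prod_eq_one (D : ν → Finset ℕ) (A : Finset ν) (p : ν → ℕ → ℝ)
    (h1 : ∀ x ∈ A, ∑ n ∈ D x, p x n = 1) (h2 : ∀ x ∉ A, ∃ c, D x = {c}) :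
    ∑ w ∈ Fintype.piFinset D, ∏ u ∈ A, p u (w u) = 1 := by
  have key := Finset.prod_univ_sum (κ := fun _ : ν => ℕ) D
    (fun x j => if x ∈ A then p x j else 1)
  have h3 : ∀ w : ν → ℕ, (∏ x : ν, (if x ∈ A then p x (w x) else 1))
      = ∏ u ∈ A, p u (w u) := by
    intro w
    rw [← Finset.prod_subset A.subset_univ (fun x _ hx => if_neg hx)]
    exact Finset.prod_congr rfl (fun x hx => if_pos hx)
  rw [Finset.sum_congr rfl (fun w _ => (h3 w).symm), ← key]
  apply Finset.prod_eq_one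
  intro x _
  by_cases hx : x ∈ A
  · simp only [hx, if_true]; exact h1 x hx
  · obtain ⟨c, hc⟩ := h2 x hx
    simp [hx, hc]

/-- Splitting a sum of a product of two functions depending on complementary
coordinate blocks. -/
lemma sum_piFinset_mul_split (D : ν → Finset ℕ) (d0 : ν → ℕ)
    (hd0 : d0 ∈ Fintype.piFinset D) (B : Finset ν) (f g : (ν → ℕ) → ℝ)
    (hf : ∀ w w', w ∈ Fintype.piFinset D → w' ∈ Fintype.piFinset D →
      (∀ x ∈ B, w x = w' x) → f w = f w')
    (hg : ∀ w w', w ∈ Fintype.piFinset D → w' ∈ Fintype.piFinset D →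
      (∀ x ∉ B, w x = w' x) → g w = g w') :
    ∑ w ∈ Fintype.piFinset D, f w * g w
      = (∑ a ∈ Fintype.piFinset (fun x => if x ∈ B then D x else {d0 x}), f a)
        * (∑ b ∈ Fintype.piFinset (fun x => if x ∈ B then {d0 x} else D x), g b) := by
  classical
  have hd0' := Fintype.mem_piFinset.mp hd0
  rw [Finset.sum_mul_sum, ← Finset.sum_product']
  refine Finset.sum_bij' (fun w _ => ((fun x => if x ∈ B then w x else d0 x),
      (fun x => if x ∈ B then d0 x else w x)))
    (fun p _ => fun x => if x ∈ B then p.1 x else p.2 x) ?_ ?_ ?_ ?_ ?_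
  · intro w hw
    have hw' := Fintype.mem_piFinset.mp hw
    rw [Finset.mem_product]
    constructor
    · rw [Fintype.mem_piFinset]; intro x
      by_cases hx : x ∈ B <;> simp [hx, hw' x]
    · rw [Fintype.mem_piFinset]; intro x
      by_cases hx : x ∈ B <;> simp [hx, hw' x]
  · intro p hp
    rw [Finset.mem_product] at hp
    have h1 := Fintype.mem_piFinset.mp hp.1
    have h2 := Fintype.mem_piFinset.mp hp.2
    rw [Fintype.mem_piFinset]
    intro x
    by_cases hx : x ∈ B
    · rw [if_pos hx]
      have := h1 x; rwa [if_pos hx] at this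
    · rw [if_neg hx]
      have := h2 x; rwa [if_neg hx] at this
  · intro w hw
    funext x
    by_cases hx : x ∈ B <;> simp [hx]
  · intro p hp
    rw [Finset.mem_product] at hp
    have h1 := Fintype.mem_piFinset.mp hp.1
    have h2 := Fintype.mem_piFinset.mp hp.2
    have e1 : ∀ x ∉ B, p.1 x = d0 x := by
      intro x hx; have := h1 x; rw [if_neg hx, Finset.mem_singleton] at this; exact this
    have e2 : ∀ x ∈ B, p.2 x = d0 x := by
      intro x hx; have := h2 x; rw [if_pos hx, Finset.mem_singleton] at this; exact this
    dsimp only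
    ext x
    · dsimp only
      by_cases hx : x ∈ B
      · simp [hx]
      · simp only [hx, if_false]
        exact (e1 x hx).symm
    · dsimp only
      by_cases hx : x ∈ B
      · simp only [hx, if_true]
        exact (e2 x hx).symm
      · simp [hx]
  · intro w hw
    dsimp only
    have hw' := Fintype.mem_piFinset.mp hw
    have hw1 : (fun x => if x ∈ B then w x else d0 x) ∈ Fintype.piFinset D := by
      rw [Fintype.mem_piFinset]; intro x
      by_cases hx : x ∈ B
      · simpa [hx] using hw' x
      · simp [hx, hd0' x]
    have hw2 : (fun x => if x ∈ B then d0 x else w x) ∈ Fintype.piFinset D := by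
      rw [Fintype.mem_piFinset]; intro x
      by_cases hx : x ∈ B
      · simp [hx, hd0' x]
      · simpa [hx] using hw' x
    have e1 : f w = f (fun x => if x ∈ B then w x else d0 x) :=
      hf _ _ hw hw1 (fun x hx => by simp [hx])
    have e2 : g w = g (fun x => if x ∈ B then d0 x else w x) :=
      hg _ _ hw hw2 (fun x hx => by simp [hx])
    rw [e1, e2]

end CausalGraph
namespace CausalGraph

variable {ν : Type} [Fintype ν] [DecidableEq ν] {G : CausalGraph ν}

lemma not_E_self (s : ν) : ¬ G.E s s := fun h => G.acyclic s (Relation.TransGen.single h)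

lemma obs_not_unobs {x : ν} (hx : x ∈ G.obs) : x ∉ G.unobs :=
  Finset.disjoint_left.mp G.disj hx

/-- The point of `dom(V)` determined by `x` off `T` and `y` on `T`. -/
noncomputable def zpt (G : CausalGraph ν) (T : Finset ν) (x y : ν → ℕ) : ν → ℕ :=
  fun i => if i ∈ G.obs then (if i ∈ T then y i else x i) else 0

namespace SEM

variable (M : SEM G)

lemma Dfix_pinned {v w : ν → ℕ} (hw : w ∈ Fintype.piFinset (M.Dfix v)) {x : ν}
    (hx : x ∉ G.unobs) : w x = v x := by
  have := Fintype.mem_piFinset.mp hw x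
  rw [Dfix, if_neg hx] at this
  simpa using this

lemma update_mem_obsAssign {v : ν → ℕ} (hv : v ∈ M.obsAssign) {s : ν} (hs : s ∈ G.obs)
    {n : ℕ} (hn : n ∈ M.dom s) : Function.update v s n ∈ M.obsAssign := by
  rw [obsAssign, Fintype.mem_piFinset]
  intro x
  by_cases hx : x = s
  · subst hx; rw [Function.update_self, if_pos hs]; exact hn
  · rw [Function.update_of_ne hx]; exact M.mem_obsAssign hv x

lemma Dfix_update {v : ν → ℕ} {s : ν} (hs : s ∈ G.obs) (n : ℕ) :
    M.Dfix (Function.update v s n) = Function.update (M.Dfix v) s {n} := by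
  funext x
  by_cases hx : x = s
  · subst hx
    rw [Function.update_self, Dfix, if_neg (obs_not_unobs hs), Function.update_self]
  · rw [Function.update_of_ne hx, Dfix, Dfix, Function.update_of_ne hx]

/-- Summing out a sink variable. -/
lemma sum_sink (T : Finset ν) (hT : T ⊆ G.obs) {s : ν} (hsT : s ∈ T)
    (hsink : ∀ y ∈ T, ¬ G.E s y) {v : ν → ℕ} (hv : v ∈ M.obsAssign) :
    ∑ n ∈ M.dom s, M.Q T (Function.update v s n) = M.Q (T.erase s) v := by
  have hs : s ∈ G.obs := hT hsT
  have hDs : M.Dfix v s = {v s} := by rw [Dfix, if_neg (obs_not_unobs hs)]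
  have step : ∀ n ∈ M.dom s, M.Q T (Function.update v s n)
      = ∑ w ∈ Fintype.piFinset (M.Dfix v),
          ((∏ x ∈ T, M.pO x ((Function.update w s n) x) (Function.update w s n))
            * ∏ u ∈ G.unobs, M.pU u ((Function.update w s n) u)) := by
    intro n hn
    rw [M.Q_eq_sum (M.update_mem_obsAssign hv hs hn) T, M.Dfix_update hs n,
      sum_piFinset_update (M.Dfix v) s (v s) n hDs]
  rw [Finset.sum_congr rfl step, Finset.sum_comm, M.Q_eq_sum hv]
  apply Finset.sum_congr rfl
  intro w hw
  have hupd : ∀ n, (∏ x ∈ T, M.pO x ((Function.update w s n) x) (Function.update w s n))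
      * ∏ u ∈ G.unobs, M.pU u ((Function.update w s n) u)
      = M.pO s n w * ((∏ x ∈ T.erase s, M.pO x (w x) w) * ∏ u ∈ G.unobs, M.pU u (w u)) := by
    intro n
    have hpU : ∀ u ∈ G.unobs, M.pU u ((Function.update w s n) u) = M.pU u (w u) := by
      intro u hu
      rw [Function.update_of_ne (by rintro rfl; exact obs_not_unobs hs hu)]
    have hpO : ∀ x ∈ T.erase s,
        M.pO x ((Function.update w s n) x) (Function.update w s n) = M.pO x (w x) w := by
      intro x hx
      have hxs : x ≠ s := Finset.ne_of_mem_erase hx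
      rw [Function.update_of_ne hxs]
      apply M.pO_par
      intro p hp
      have hps : p ≠ s := fun h => hsink x (Finset.mem_of_mem_erase hx) (h ▸ hp)
      rw [Function.update_of_ne hps]
    have hpOs : M.pO s ((Function.update w s n) s) (Function.update w s n)
        = M.pO s n w := by
      rw [Function.update_self]
      apply M.pO_par
      intro p hp
      have hps : p ≠ s := fun h => not_E_self s (h ▸ hp)
      rw [Function.update_of_ne hps]
    rw [← Finset.mul_prod_erase T _ hsT, hpOs,
      Finset.prod_congr rfl hpO, Finset.prod_congr rfl hpU, mul_assoc]
  rw [Finset.sum_congr rfl (fun n _ => hupd n), ← Finset.sum_mul, M.pO_sum s hs w, one_mul]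

lemma pO_le_one {x : ν} (hx : x ∈ G.obs) {n : ℕ} (hn : n ∈ M.dom x) (pa : ν → ℕ) :
    M.pO x n pa ≤ 1 := by
  rw [← M.pO_sum x hx pa]
  exact Finset.single_le_sum (fun m _ => M.pO_nonneg x m pa) hn

lemma Q_pos (hpos : M.positive) {T : Finset ν} (hT : T ⊆ G.obs) {v : ν → ℕ}
    (hv : v ∈ M.obsAssign) : 0 < M.Q T v := by
  have hle : M.P v ≤ M.Q T v := by
    rw [P, M.Q_eq_sum hv, M.Q_eq_sum hv]
    apply Finset.sum_le_sum
    intro w hw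
    have hpU : (0:ℝ) ≤ ∏ u ∈ G.unobs, M.pU u (w u) :=
      Finset.prod_nonneg (fun u _ => M.pU_nonneg u (w u))
    apply mul_le_mul_of_nonneg_right _ hpU
    rw [← Finset.prod_sdiff hT]
    apply mul_le_of_le_one_left
    · exact Finset.prod_nonneg (fun x _ => M.pO_nonneg x (w x) w)
    · apply Finset.prod_le_one
      · intro x _; exact M.pO_nonneg x (w x) w
      · intro x hx
        have hxo : x ∈ G.obs := (Finset.mem_sdiff.mp hx).1
        have hwx : w x = v x := M.Dfix_pinned hw (obs_not_unobs hxo)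
        rw [hwx]
        exact M.pO_le_one hxo (M.obsAssign_dom hv hxo) w
  exact lt_of_lt_of_le (hpos v hv) hle

lemma obsAssign_congr (M₁ M₂ : SEM G) (hdom : ∀ i ∈ G.obs, M₁.dom i = M₂.dom i) :
    M₁.obsAssign = M₂.obsAssign := by
  unfold obsAssign
  congr 1
  funext x
  by_cases hx : x ∈ G.obs
  · rw [if_pos hx, if_pos hx, hdom x hx]
  · rw [if_neg hx, if_neg hx]


lemma zpt_mem (T : Finset ν) (x y : ν → ℕ)
    (hx : ∀ i ∈ G.obs \ T, x i ∈ M.dom i) (hy : ∀ i ∈ T, y i ∈ M.dom i) :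
    G.zpt T x y ∈ M.obsAssign := by
  rw [obsAssign, Fintype.mem_piFinset]
  intro i
  unfold CausalGraph.zpt
  by_cases hi : i ∈ G.obs
  · rw [if_pos hi, if_pos hi]
    by_cases hiT : i ∈ T
    · rw [if_pos hiT]; exact hy i hiT
    · rw [if_neg hiT]; exact hx i (Finset.mem_sdiff.mpr ⟨hi, hiT⟩)
  · rw [if_neg hi, if_neg hi]; exact Finset.mem_singleton_self 0

lemma zpt_self {v : ν → ℕ} (hv : v ∈ M.obsAssign) (T : Finset ν) :
    G.zpt T v v = v := by
  funext i
  unfold CausalGraph.zpt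
  by_cases hi : i ∈ G.obs
  · rw [if_pos hi]; by_cases hiT : i ∈ T <;> simp [hiT]
  · rw [if_neg hi, M.obsAssign_zero hv hi]

/-- Bridge: the post-interventional probability for intervening on everything
outside `T` is an evaluation of `Q[T]`. -/
lemma Px_eq_Q (T : Finset ν) (hT : T ⊆ G.obs) (x y : ν → ℕ)
    (hx : ∀ i ∈ G.obs \ T, x i ∈ M.dom i) (hy : ∀ i ∈ T, y i ∈ M.dom i) :
    M.Px (G.obs \ T) x T y = M.Q T (G.zpt T x y) := by
  have hz := M.zpt_mem T x y hx hy
  have hfil : M.obsAssign.filter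
      (fun v => (∀ i ∈ G.obs \ T, v i = x i) ∧ (∀ i ∈ T, v i = y i)) = {G.zpt T x y} := by
    ext v
    rw [Finset.mem_filter, Finset.mem_singleton]
    constructor
    · rintro ⟨hv, h1, h2⟩
      funext i
      unfold CausalGraph.zpt
      by_cases hi : i ∈ G.obs
      · rw [if_pos hi]
        by_cases hiT : i ∈ T
        · rw [if_pos hiT]; exact h2 i hiT
        · rw [if_neg hiT]; exact h1 i (Finset.mem_sdiff.mpr ⟨hi, hiT⟩)
      · rw [if_neg hi]; exact M.obsAssign_zero hv hi
    · rintro rfl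
      refine ⟨hz, ?_, ?_⟩
      · intro i hi
        unfold CausalGraph.zpt
        rw [if_pos (Finset.mem_sdiff.mp hi).1, if_neg (Finset.mem_sdiff.mp hi).2]
      · intro i hi
        unfold CausalGraph.zpt
        rw [if_pos (hT hi), if_pos hi]
  have hTT : G.obs \ (G.obs \ T) = T := by
    rw [sdiff_sdiff_right_self]
    exact Finset.inter_eq_right.mpr hT
  rw [Px, hfil, Finset.sum_singleton, hTT]

end SEM

end CausalGraph
namespace CausalGraph

variable {ν : Type} [Fintype ν] [DecidableEq ν] {G : CausalGraph ν}

lemma biEdge_symm {S : Finset ν} {a b : ν} (h : G.biEdge S a b) : G.biEdge S b a := by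
  obtain ⟨hne, ha, hb, u, hu, h1, h2⟩ := h
  exact ⟨hne.symm, hb, ha, u, hu, h2, h1⟩

lemma rel_symm {S : Finset ν} {a b : ν}
    (h : Relation.ReflTransGen (G.biEdge S) a b) :
    Relation.ReflTransGen (G.biEdge S) b a :=
  by
    induction h with
    | refl => exact Relation.ReflTransGen.refl
    | tail _ hbc ih => exact Relation.ReflTransGen.head (biEdge_symm hbc) ih

lemma mem_cComponents {S T : Finset ν} :
    T ∈ G.cComponents S ↔ ∃ a ∈ S,
      T = S.filter (fun b => Relation.ReflTransGen (G.biEdge S) a b) := by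
  unfold cComponents
  rw [Finset.mem_image]
  constructor
  · rintro ⟨a, ha, rfl⟩; exact ⟨a, ha, rfl⟩
  · rintro ⟨a, ha, rfl⟩; exact ⟨a, ha, rfl⟩

lemma cComp_subset {S T : Finset ν} (hT : T ∈ G.cComponents S) : T ⊆ S := by
  obtain ⟨a, _, rfl⟩ := mem_cComponents.mp hT
  exact Finset.filter_subset _ _

lemma cComp_nonempty {S T : Finset ν} (hT : T ∈ G.cComponents S) : T.Nonempty := by
  obtain ⟨a, ha, rfl⟩ := mem_cComponents.mp hT
  exact ⟨a, Finset.mem_filter.mpr ⟨ha, Relation.ReflTransGen.refl⟩⟩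

lemma cComp_closed {S T : Finset ν} (hT : T ∈ G.cComponents S) {a b : ν} (ha : a ∈ T)
    (hb : b ∈ S) (hab : Relation.ReflTransGen (G.biEdge S) a b) : b ∈ T := by
  obtain ⟨a0, _, rfl⟩ := mem_cComponents.mp hT
  have h0 := (Finset.mem_filter.mp ha).2
  exact Finset.mem_filter.mpr ⟨hb, h0.trans hab⟩

lemma cComp_disjoint {S T T' : Finset ν} (hT : T ∈ G.cComponents S)
    (hT' : T' ∈ G.cComponents S) (hne : T ≠ T') : Disjoint T T' := by
  by_contra hdis
  obtain ⟨c, hcT, hcT'⟩ := Finset.not_disjoint_iff.mp hdis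
  apply hne
  obtain ⟨a, ha, rfl⟩ := mem_cComponents.mp hT
  obtain ⟨a', ha', rfl⟩ := mem_cComponents.mp hT'
  have hac := (Finset.mem_filter.mp hcT).2
  have ha'c := (Finset.mem_filter.mp hcT').2
  have haa' : Relation.ReflTransGen (G.biEdge S) a a' := hac.trans (rel_symm ha'c)
  ext b
  simp only [Finset.mem_filter, and_congr_right_iff]
  intro _
  exact ⟨fun h => (rel_symm haa').trans h, fun h => haa'.trans h⟩

lemma cComp_biUnion (S : Finset ν) : (G.cComponents S).biUnion id = S := by
  apply Finset.Subset.antisymm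
  · intro b hb
    obtain ⟨T, hT, hbT⟩ := Finset.mem_biUnion.mp hb
    exact cComp_subset hT hbT
  · intro b hb
    apply Finset.mem_biUnion.mpr
    refine ⟨S.filter (fun c => Relation.ReflTransGen (G.biEdge S) b c),
      mem_cComponents.mpr ⟨b, hb, rfl⟩, ?_⟩
    exact Finset.mem_filter.mpr ⟨hb, Relation.ReflTransGen.refl⟩

lemma cComp_pairwiseDisjoint (S : Finset ν) :
    (↑(G.cComponents S) : Set (Finset ν)).PairwiseDisjoint id := by
  intro T hT T' hT' hne
  exact cComp_disjoint (by simpa using hT) (by simpa using hT') hne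

lemma cComp_erase {S T : Finset ν} (hT : T ∈ G.cComponents S) {s : ν} (hs : s ∈ S)
    (hsT : s ∉ T) : T ∈ G.cComponents (S.erase s) := by
  obtain ⟨a0, ha0S, rfl⟩ := mem_cComponents.mp hT
  set T := S.filter (fun b => Relation.ReflTransGen (G.biEdge S) a0 b) with hTdef
  have ha0T : a0 ∈ T := Finset.mem_filter.mpr ⟨ha0S, Relation.ReflTransGen.refl⟩
  have ha0s : a0 ≠ s := fun h => hsT (h ▸ ha0T)
  have key : ∀ b, Relation.ReflTransGen (G.biEdge S) a0 b → b = a0 ∨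
      (b ∈ T ∧ Relation.ReflTransGen (G.biEdge (S.erase s)) a0 b) := by
    intro b hb
    induction hb with
    | refl => exact Or.inl rfl
    | tail h1 h2 ih =>
      rename_i c b
      right
      have hbS : b ∈ S := h2.2.2.1
      have hcT : c ∈ T := by
        rcases ih with rfl | ⟨hcT, _⟩
        · exact ha0T
        · exact hcT
      have hbT : b ∈ T :=
        Finset.mem_filter.mpr ⟨hbS, (Finset.mem_filter.mp hcT).2.tail h2⟩
      have hcs : c ≠ s := fun h => hsT (h ▸ hcT)
      have hbs : b ≠ s := fun h => hsT (h ▸ hbT)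
      have hedge : G.biEdge (S.erase s) c b :=
        ⟨h2.1, Finset.mem_erase.mpr ⟨hcs, h2.2.1⟩, Finset.mem_erase.mpr ⟨hbs, hbS⟩,
          h2.2.2.2⟩
      refine ⟨hbT, ?_⟩
      rcases ih with rfl | ⟨_, hrel⟩
      · exact Relation.ReflTransGen.single hedge
      · exact hrel.tail hedge
  apply mem_cComponents.mpr
  refine ⟨a0, Finset.mem_erase.mpr ⟨ha0s, ha0S⟩, ?_⟩
  ext b
  simp only [hTdef, Finset.mem_filter, Finset.mem_erase]
  constructor
  · rintro ⟨hbS, hrel⟩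
    have hbT : b ∈ T := Finset.mem_filter.mpr ⟨hbS, hrel⟩
    have hbs : b ≠ s := fun h => hsT (h ▸ hbT)
    rcases key b hrel with rfl | ⟨_, hrel'⟩
    · exact ⟨⟨hbs, hbS⟩, Relation.ReflTransGen.refl⟩
    · exact ⟨⟨hbs, hbS⟩, hrel'⟩
  · rintro ⟨⟨hbs, hbS⟩, hrel⟩
    refine ⟨hbS, ?_⟩
    refine hrel.lift id ?_
    rintro x y ⟨hxy, hx, hy, hu⟩
    exact ⟨hxy, Finset.mem_of_mem_erase hx, Finset.mem_of_mem_erase hy, hu⟩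

/-- The unobserved variables having a child in `T`. -/
noncomputable def UT (G : CausalGraph ν) (T : Finset ν) : Finset ν :=
  G.unobs.filter (fun u => ∃ x ∈ T, G.E u x)

lemma UT_subset (T : Finset ν) : G.UT T ⊆ G.unobs := Finset.filter_subset _ _

lemma mem_UT {T : Finset ν} {u : ν} (hu : u ∈ G.unobs) {x : ν} (hx : x ∈ T)
    (hE : G.E u x) : u ∈ G.UT T :=
  Finset.mem_filter.mpr ⟨hu, x, hx, hE⟩

lemma UT_disjoint {S T T' : Finset ν} (hT : T ∈ G.cComponents S)
    (hT' : T' ∈ G.cComponents S) (hne : T ≠ T') : Disjoint (G.UT T) (G.UT T') := by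
  rw [Finset.disjoint_left]
  rintro u huT huT'
  obtain ⟨hu, x, hxT, hEx⟩ := Finset.mem_filter.mp huT
  obtain ⟨_, y, hyT', hEy⟩ := Finset.mem_filter.mp huT'
  have hdis := cComp_disjoint hT hT' hne
  by_cases hxy : x = y
  · exact Finset.disjoint_left.mp hdis hxT (hxy ▸ hyT')
  · have hedge : G.biEdge S x y :=
      ⟨hxy, cComp_subset hT hxT, cComp_subset hT' hyT', u, hu, hEx, hEy⟩
    have hyT : y ∈ T := cComp_closed hT hxT (cComp_subset hT' hyT')
      (Relation.ReflTransGen.single hedge)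
    exact Finset.disjoint_left.mp hdis hyT hyT'

/-- Every nonempty subset of vertices has a sink (no outgoing edge into the set). -/
lemma exists_sink (G : CausalGraph ν) {S : Finset ν} (hS : S.Nonempty) :
    ∃ s ∈ S, ∀ y ∈ S, ¬ G.E s y := by
  haveI : IsTrans ν (fun a b => Relation.TransGen G.E b a) :=
    ⟨fun _ _ _ hab hbc => Relation.TransGen.trans hbc hab⟩
  haveI : IsIrrefl ν (fun a b => Relation.TransGen G.E b a) :=
    ⟨fun a h => G.acyclic a h⟩
  have hwf : WellFounded (fun a b : ν => Relation.TransGen G.E b a) :=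
    Finite.wellFounded_of_trans_of_irrefl _
  obtain ⟨s, hsS, hmin⟩ := hwf.has_min ↑S (Finset.coe_nonempty.mpr hS)
  exact ⟨s, hsS, fun y hy hE => hmin y hy (Relation.TransGen.single hE)⟩

end CausalGraph
namespace CausalGraph

variable {ν : Type} [Fintype ν] [DecidableEq ν] {G : CausalGraph ν}

namespace SEM

variable (M : SEM G)

/-- The local integrand attached to a set `T` of observed variables. -/
noncomputable def fT (T : Finset ν) (w : ν → ℕ) : ℝ :=
  (∏ x ∈ T, M.pO x (w x) w) * ∏ u ∈ G.UT T, M.pU u (w u)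

lemma fT_congr {v : ν → ℕ} {T : Finset ν} (hT : T ⊆ G.obs) {w w' : ν → ℕ}
    (hw : w ∈ Fintype.piFinset (M.Dfix v)) (hw' : w' ∈ Fintype.piFinset (M.Dfix v))
    (hagree : ∀ u ∈ G.UT T, w u = w' u) : M.fT T w = M.fT T w' := by
  unfold fT
  congr 1
  · apply Finset.prod_congr rfl
    intro x hx
    have hxo : x ∈ G.obs := hT hx
    rw [M.Dfix_pinned hw (obs_not_unobs hxo), M.Dfix_pinned hw' (obs_not_unobs hxo)]
    apply M.pO_par
    intro p hp
    by_cases hpu : p ∈ G.unobs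
    · exact hagree p (mem_UT hpu hx hp)
    · rw [M.Dfix_pinned hw hpu, M.Dfix_pinned hw' hpu]
  · exact Finset.prod_congr rfl (fun u hu => by rw [hagree u hu])

theorem Q_factor {S : Finset ν} (hS : S ⊆ G.obs) {v : ν → ℕ} (hv : v ∈ M.obsAssign) :
    M.Q S v = ∏ T ∈ G.cComponents S, M.Q T v := by
  classical
  set d0 : ν → ℕ := fun x => (M.Dfix_nonempty v x).choose with hd0def
  have hd0 : d0 ∈ Fintype.piFinset (M.Dfix v) :=
    Fintype.mem_piFinset.mpr (fun x => (M.Dfix_nonempty v x).choose_spec)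
  have claim : ∀ 𝒦 : Finset (Finset ν), 𝒦 ⊆ G.cComponents S →
      ∑ w ∈ Fintype.piFinset (M.Dfix v), (∏ T ∈ 𝒦, M.fT T w)
          * ∏ u ∈ G.unobs \ 𝒦.biUnion G.UT, M.pU u (w u)
        = ∏ T ∈ 𝒦, M.Q T v := by
    intro 𝒦
    induction 𝒦 using Finset.induction_on with
    | empty =>
      intro _
      simp only [Finset.prod_empty, one_mul, Finset.biUnion_empty, Finset.sdiff_empty]
      apply sum_piFinset_prod_eq_one
      · intro x hx
        rw [Dfix, if_pos hx]
        exact M.pU_sum x hx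
      · intro x hx
        exact ⟨v x, by rw [Dfix, if_neg hx]⟩
    | @insert T 𝒦 hTK ih =>
      intro hsub
      have hTc : T ∈ G.cComponents S := hsub (Finset.mem_insert_self T 𝒦)
      have h𝒦 : 𝒦 ⊆ G.cComponents S := fun A hA => hsub (Finset.mem_insert_of_mem hA)
      have hTobs : T ⊆ G.obs := (cComp_subset hTc).trans hS
      have hBu : G.UT T ⊆ G.unobs := UT_subset T
      have hdisjB : Disjoint (G.UT T) (𝒦.biUnion G.UT) := by
        rw [Finset.disjoint_biUnion_right]
        intro T' hT'
        exact UT_disjoint hTc (h𝒦 hT') (fun h => hTK (h ▸ hT'))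
      have hset : G.unobs \ 𝒦.biUnion G.UT
          = G.UT T ∪ (G.unobs \ (insert T 𝒦).biUnion G.UT) := by
        rw [Finset.biUnion_insert]
        ext u
        simp only [Finset.mem_sdiff, Finset.mem_union]
        constructor
        · rintro ⟨hu, hK⟩
          by_cases hub : u ∈ G.UT T
          · exact Or.inl hub
          · exact Or.inr ⟨hu, fun h => (h.elim hub hK)⟩
        · rintro (hub | ⟨hu, hK⟩)
          · exact ⟨hBu hub, Finset.disjoint_left.mp hdisjB hub⟩
          · exact ⟨hu, fun h => hK (Or.inr h)⟩
      have hdisj2 : Disjoint (G.UT T) (G.unobs \ (insert T 𝒦).biUnion G.UT) := by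
        rw [Finset.disjoint_left]
        intro u hub hu
        have := (Finset.mem_sdiff.mp hu).2
        exact this (Finset.mem_biUnion.mpr ⟨T, Finset.mem_insert_self T 𝒦, hub⟩)
      set g : (ν → ℕ) → ℝ := fun w => (∏ T' ∈ 𝒦, M.fT T' w)
          * ∏ u ∈ G.unobs \ (insert T 𝒦).biUnion G.UT, M.pU u (w u) with hgdef
      have hg : ∀ w w', w ∈ Fintype.piFinset (M.Dfix v) → w' ∈ Fintype.piFinset (M.Dfix v)
          → (∀ x ∉ G.UT T, w x = w' x) → g w = g w' := by
        intro w w' hw hw' hagree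
        rw [hgdef]
        dsimp only
        congr 1
        · apply Finset.prod_congr rfl
          intro T' hT'
          have hdT' : Disjoint (G.UT T) (G.UT T') :=
            UT_disjoint hTc (h𝒦 hT') (fun h => hTK (h ▸ hT'))
          exact M.fT_congr ((cComp_subset (h𝒦 hT')).trans hS) hw hw'
            (fun u hu => hagree u (Finset.disjoint_right.mp hdT' hu))
        · apply Finset.prod_congr rfl
          intro u hu
          rw [hagree u (Finset.disjoint_right.mp hdisj2 hu)]
      have hfB : ∀ w w', w ∈ Fintype.piFinset (M.Dfix v) → w' ∈ Fintype.piFinset (M.Dfix v)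
          → (∀ x ∈ G.UT T, w x = w' x) → M.fT T w = M.fT T w' := by
        intro w w' hw hw' hagree
        exact M.fT_congr hTobs hw hw' hagree
      have norm1 : ∑ a ∈ Fintype.piFinset (fun x => if x ∈ G.UT T then M.Dfix v x
          else {d0 x}), ∏ u ∈ G.UT T, M.pU u (a u) = 1 := by
        apply sum_piFinset_prod_eq_one
        · intro x hx
          rw [if_pos hx, Dfix, if_pos (hBu hx)]
          exact M.pU_sum x (hBu hx)
        · intro x hx
          exact ⟨d0 x, by rw [if_neg hx]⟩
      have norm2 : ∑ b ∈ Fintype.piFinset (fun x => if x ∈ G.UT T then {d0 x}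
          else M.Dfix v x), ∏ u ∈ G.unobs \ G.UT T, M.pU u (b u) = 1 := by
        apply sum_piFinset_prod_eq_one
        · intro x hx
          obtain ⟨hxu, hxB⟩ := Finset.mem_sdiff.mp hx
          rw [if_neg hxB, Dfix, if_pos hxu]
          exact M.pU_sum x hxu
        · intro x hx
          by_cases hxB : x ∈ G.UT T
          · exact ⟨d0 x, by rw [if_pos hxB]⟩
          · refine ⟨v x, ?_⟩
            rw [if_neg hxB, Dfix, if_neg (fun hxu => hx (Finset.mem_sdiff.mpr ⟨hxu, hxB⟩))]
      have eq1 : M.Q T v = ∑ a ∈ Fintype.piFinset (fun x => if x ∈ G.UT T then M.Dfix v x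
          else {d0 x}), M.fT T a := by
        rw [M.Q_eq_sum hv T]
        have hterm : ∀ w : ν → ℕ, (∏ x ∈ T, M.pO x (w x) w) * ∏ u ∈ G.unobs, M.pU u (w u)
            = M.fT T w * ∏ u ∈ G.unobs \ G.UT T, M.pU u (w u) := by
          intro w
          rw [fT, ← Finset.prod_sdiff hBu (f := fun u => M.pU u (w u))]
          ring
        rw [Finset.sum_congr rfl (fun w _ => hterm w),
          sum_piFinset_mul_split (M.Dfix v) d0 hd0 (G.UT T) (M.fT T)
            (fun w => ∏ u ∈ G.unobs \ G.UT T, M.pU u (w u)) hfB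
            (fun w w' _ _ hag => Finset.prod_congr rfl
              (fun u hu => by rw [hag u (Finset.mem_sdiff.mp hu).2])),
          norm2, mul_one]
      have eq2 : ∑ b ∈ Fintype.piFinset (fun x => if x ∈ G.UT T then {d0 x}
          else M.Dfix v x), g b = ∏ T' ∈ 𝒦, M.Q T' v := by
        rw [← ih h𝒦]
        have hterm : ∀ w : ν → ℕ, (∏ T' ∈ 𝒦, M.fT T' w)
            * ∏ u ∈ G.unobs \ 𝒦.biUnion G.UT, M.pU u (w u)
            = (∏ u ∈ G.UT T, M.pU u (w u)) * g w := by
          intro w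
          rw [hset, Finset.prod_union hdisj2, hgdef]
          ring
        rw [Finset.sum_congr rfl (fun w _ => hterm w),
          sum_piFinset_mul_split (M.Dfix v) d0 hd0 (G.UT T)
            (fun w => ∏ u ∈ G.UT T, M.pU u (w u)) g
            (fun w w' _ _ hag => Finset.prod_congr rfl (fun u hu => by rw [hag u hu]))
            hg, norm1, one_mul]
      have hterm : ∀ w : ν → ℕ, (∏ T' ∈ insert T 𝒦, M.fT T' w)
          * ∏ u ∈ G.unobs \ (insert T 𝒦).biUnion G.UT, M.pU u (w u)
          = M.fT T w * g w := by
        intro w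
        rw [Finset.prod_insert hTK, hgdef]
        ring
      rw [Finset.sum_congr rfl (fun w _ => hterm w),
        sum_piFinset_mul_split (M.Dfix v) d0 hd0 (G.UT T) (M.fT T) g hfB hg,
        ← eq1, eq2, Finset.prod_insert hTK]
  have hUTpd : (↑(G.cComponents S) : Set (Finset ν)).PairwiseDisjoint G.UT := by
    intro T hT T' hT' hne
    exact UT_disjoint (by simpa using hT) (by simpa using hT') hne
  have hUsub : (G.cComponents S).biUnion G.UT ⊆ G.unobs := by
    intro u hu
    obtain ⟨T, _, huT⟩ := Finset.mem_biUnion.mp hu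
    exact UT_subset T huT
  rw [M.Q_eq_sum hv S, ← claim (G.cComponents S) (le_refl _)]
  apply Finset.sum_congr rfl
  intro w _
  have e1 : ∏ x ∈ S, M.pO x (w x) w
      = ∏ T ∈ G.cComponents S, ∏ x ∈ T, M.pO x (w x) w := by
    conv_lhs => rw [← cComp_biUnion (G := G) S]
    exact Finset.prod_biUnion (cComp_pairwiseDisjoint S)
  have e2 : ∏ u ∈ G.unobs, M.pU u (w u)
      = (∏ T ∈ G.cComponents S, ∏ u ∈ G.UT T, M.pU u (w u))
        * ∏ u ∈ G.unobs \ (G.cComponents S).biUnion G.UT, M.pU u (w u) := by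
    rw [← Finset.prod_sdiff hUsub (f := fun u => M.pU u (w u)),
      Finset.prod_biUnion hUTpd]
    ring
  rw [e1, e2]
  have e3 : ∏ T ∈ G.cComponents S, M.fT T w
      = (∏ T ∈ G.cComponents S, ∏ x ∈ T, M.pO x (w x) w)
        * ∏ T ∈ G.cComponents S, ∏ u ∈ G.UT T, M.pU u (w u) := by
    rw [← Finset.prod_mul_distrib]
    rfl
  rw [e3]
  ring

end SEM

end CausalGraph
namespace CausalGraph

variable {ν : Type} [Fintype ν] [DecidableEq ν] {G : CausalGraph ν}

/-- Main induction: equality of `Q[S]` forces equality of `Q[Sᵢ]` on each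
c-component `Sᵢ` of `S`. -/
lemma main_ccomp (M₁ M₂ : SEM G) (h₁ : M₁.positive) (h₂ : M₂.positive)
    (hdom : ∀ i ∈ G.obs, M₁.dom i = M₂.dom i) :
    ∀ S : Finset ν, S ⊆ G.obs → (∀ v ∈ M₁.obsAssign, M₁.Q S v = M₂.Q S v) →
      ∀ T ∈ G.cComponents S, ∀ v ∈ M₁.obsAssign, M₁.Q T v = M₂.Q T v := by
  have hOA : M₁.obsAssign = M₂.obsAssign := SEM.obsAssign_congr M₁ M₂ hdom
  intro S
  induction S using Finset.strongInduction with
  | _ S ih =>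
    intro hSobs hQ T hT v hv
    have hTS : T ⊆ S := cComp_subset hT
    have hSne : S.Nonempty := (cComp_nonempty hT).mono hTS
    obtain ⟨s, hsS, hsink⟩ := G.exists_sink hSne
    have hs : s ∈ G.obs := hSobs hsS
    have hS' : S.erase s ⊆ G.obs := (Finset.erase_subset s S).trans hSobs
    have hkey : ∀ v' ∈ M₁.obsAssign, M₁.Q (S.erase s) v' = M₂.Q (S.erase s) v' := by
      intro v' hv'
      rw [← M₁.sum_sink S hSobs hsS hsink hv',
        ← M₂.sum_sink S hSobs hsS hsink (hOA ▸ hv'), ← hdom s hs]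
      apply Finset.sum_congr rfl
      intro n hn
      exact hQ _ (M₁.update_mem_obsAssign hv' hs hn)
    have hstep : ∀ T' ∈ G.cComponents S, s ∉ T' →
        ∀ v' ∈ M₁.obsAssign, M₁.Q T' v' = M₂.Q T' v' := by
      intro T' hT' hsT' v' hv'
      exact ih (S.erase s) (Finset.erase_ssubset hsS) hS' hkey T'
        (cComp_erase hT' hsS hsT') v' hv'
    by_cases hsT : s ∈ T
    · -- cancellation argument
      have hv₂ : v ∈ M₂.obsAssign := hOA ▸ hv
      have h1 := M₁.Q_factor hSobs hv
      have h2 := M₂.Q_factor hSobs hv₂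
      have hins : G.cComponents S = insert T ((G.cComponents S).erase T) :=
        (Finset.insert_erase hT).symm
      have hrest : ∏ T' ∈ (G.cComponents S).erase T, M₁.Q T' v
          = ∏ T' ∈ (G.cComponents S).erase T, M₂.Q T' v := by
        apply Finset.prod_congr rfl
        intro T' hT'
        have hT'c : T' ∈ G.cComponents S := Finset.mem_of_mem_erase hT'
        have hne : T' ≠ T := Finset.ne_of_mem_erase hT'
        have hsT' : s ∉ T' :=
          fun h => Finset.disjoint_left.mp (cComp_disjoint hT'c hT hne) h hsT
        exact hstep T' hT'c hsT' v hv
      have hpos : 0 < ∏ T' ∈ (G.cComponents S).erase T, M₂.Q T' v := by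
        apply Finset.prod_pos
        intro T' hT'
        exact M₂.Q_pos h₂ ((cComp_subset (Finset.mem_of_mem_erase hT')).trans hSobs) hv₂
      have hQS := hQ v hv
      rw [h1, h2, hins, Finset.prod_insert (Finset.notMem_erase T _),
        Finset.prod_insert (Finset.notMem_erase T _), hrest] at hQS
      exact mul_right_cancel₀ (ne_of_gt hpos) hQS
    · exact hstep T hT hsT v hv

/-- From g-identifiability of `Q[T]` to pointwise determination of `Q[T]`. -/
lemma QG_to_Qeq {𝔸 : Finset (Finset ν)} {T : Finset ν} (hT : T ⊆ G.obs)
    (h : G.QGIdentifiable 𝔸 T) (M₁ M₂ : SEM G) (h₁ : M₁.positive) (h₂ : M₂.positive)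
    (hdom : ∀ i ∈ G.obs, M₁.dom i = M₂.dom i)
    (hA : ∀ A ∈ 𝔸, ∀ v ∈ M₁.obsAssign, M₁.Q A v = M₂.Q A v) :
    ∀ v ∈ M₁.obsAssign, M₁.Q T v = M₂.Q T v := by
  intro v hv
  have hv₂ : v ∈ M₂.obsAssign := SEM.obsAssign_congr M₁ M₂ hdom ▸ hv
  have hx : ∀ i ∈ G.obs \ T, v i ∈ M₁.dom i :=
    fun i hi => M₁.obsAssign_dom hv (Finset.mem_sdiff.mp hi).1
  have hy : ∀ i ∈ T, v i ∈ M₁.dom i := fun i hi => M₁.obsAssign_dom hv (hT hi)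
  have hx₂ : ∀ i ∈ G.obs \ T, v i ∈ M₂.dom i :=
    fun i hi => M₂.obsAssign_dom hv₂ (Finset.mem_sdiff.mp hi).1
  have hy₂ : ∀ i ∈ T, v i ∈ M₂.dom i := fun i hi => M₂.obsAssign_dom hv₂ (hT hi)
  have hPx := h M₁ M₂ h₁ h₂ hdom hA v v hx hy
  rw [M₁.Px_eq_Q T hT v v hx hy, M₂.Px_eq_Q T hT v v hx₂ hy₂,
    M₁.zpt_self hv T] at hPx
  exact hPx

/-- Conversely, pointwise determination of `Q[T]` gives g-identifiability. -/
lemma Qeq_to_QG {𝔸 : Finset (Finset ν)} {T : Finset ν} (hT : T ⊆ G.obs)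
    (h : ∀ M₁ M₂ : SEM G, M₁.positive → M₂.positive →
      (∀ i ∈ G.obs, M₁.dom i = M₂.dom i) →
      (∀ A ∈ 𝔸, ∀ v ∈ M₁.obsAssign, M₁.Q A v = M₂.Q A v) →
      ∀ v ∈ M₁.obsAssign, M₁.Q T v = M₂.Q T v) :
    G.QGIdentifiable 𝔸 T := by
  intro M₁ M₂ h₁ h₂ hdom hA x y hx hy
  have hx₂ : ∀ i ∈ G.obs \ T, x i ∈ M₂.dom i := fun i hi => by
    rw [← hdom i (Finset.mem_sdiff.mp hi).1]; exact hx i hi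
  have hy₂ : ∀ i ∈ T, y i ∈ M₂.dom i := fun i hi => by
    rw [← hdom i (hT hi)]; exact hy i hi
  rw [M₁.Px_eq_Q T hT x y hx hy, M₂.Px_eq_Q T hT x y hx₂ hy₂]
  exact h M₁ M₂ h₁ h₂ hdom hA _ (M₁.zpt_mem T x y hx hy)

end CausalGraph

/-- Proposition 4. `Q[S]` is g-identifiable from `(𝔸, G)` iff
`Q[Sᵢ]` is g-identifiable from `(𝔸, G)` for every c-component `Sᵢ` of `S`. -/
theorem gid_iff_gid_all_ccomponents
    {ν : Type} [Fintype ν] [DecidableEq ν] (G : CausalGraph ν)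
    (𝔸 : Finset (Finset ν)) (h𝔸 : ∀ A ∈ 𝔸, A ⊆ G.obs)
    (S : Finset ν) (hS : S ⊆ G.obs) :
    G.QGIdentifiable 𝔸 S ↔ ∀ T ∈ G.cComponents S, G.QGIdentifiable 𝔸 T := by
  constructor
  · intro h T hT
    have hTobs : T ⊆ G.obs := (CausalGraph.cComp_subset hT).trans hS
    apply CausalGraph.Qeq_to_QG hTobs
    intro M₁ M₂ h₁ h₂ hdom hA
    have hQS := CausalGraph.QG_to_Qeq hS h M₁ M₂ h₁ h₂ hdom hA
    exact CausalGraph.main_ccomp M₁ M₂ h₁ h₂ hdom S hS hQS T hT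
  · intro h
    apply CausalGraph.Qeq_to_QG hS
    intro M₁ M₂ h₁ h₂ hdom hA v hv
    have hv₂ : v ∈ M₂.obsAssign := CausalGraph.SEM.obsAssign_congr M₁ M₂ hdom ▸ hv
    rw [M₁.Q_factor hS hv, M₂.Q_factor hS hv₂]
    apply Finset.prod_congr rfl
    intro T hT
    exact CausalGraph.QG_to_Qeq ((CausalGraph.cComp_subset hT).trans hS) (h T hT)
      M₁ M₂ h₁ h₂ hdom hA v hv
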